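/- Let X ⊆ ℝ^m be a nonempty compact convex set and let ε > 0. Let X_ε = {z ∈ ℝ^m : infDist(z, X) ≤ ε} be the ε-smoothing of X. Then frontier X_ε = {y ∈ ℝ^m : infDist(y, X) = ε}. (Lemma 5.1 of the paper.) -/

import Mathlib

open Metric Set

/-- Lemma 5.1: for a nonempty compact convex set `X ⊆ ℝ^m` and `ε > 0`, the frontier
of the ε-smoothing `X_ε = {z : dist(z, X) ≤ ε}` is `{y : dist(y, X) = ε}`. -/
theorem frontier_smoothing {m : ℕ}
    (X : Set (EuclideanSpace ℝ (Fin m))) (hne : X.Nonempty)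
    (hcomp : IsCompact X) (hconv : Convex ℝ X)
    (ε : ℝ) (hε : 0 < ε) :
    frontier {z : EuclideanSpace ℝ (Fin m) | Metric.infDist z X ≤ ε} =
      {y : EuclideanSpace ℝ (Fin m) | Metric.infDist y X = ε} := by
  have hcont : Continuous fun z : EuclideanSpace ℝ (Fin m) => infDist z X :=
    continuous_infDist_pt X
  have hclosed : IsClosed {z : EuclideanSpace ℝ (Fin m) | infDist z X ≤ ε} :=
    isClosed_le hcont continuous_const
  have hint : interior {z : EuclideanSpace ℝ (Fin m) | infDist z X ≤ ε}
      = {z : EuclideanSpace ℝ (Fin m) | infDist z X < ε} := by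
    apply Subset.antisymm
    · intro y hy
      by_contra hlt
      have hyle : infDist y X ≤ ε := (interior_subset : interior {z : EuclideanSpace ℝ (Fin m) | infDist z X ≤ ε} ⊆ _) hy
      have heq : infDist y X = ε := le_antisymm hyle (not_lt.mp hlt)
      rcases Metric.isOpen_iff.mp isOpen_interior y hy with ⟨r, hr, hball⟩
      obtain ⟨p, hpX, hpd⟩ := hcomp.exists_infDist_eq_dist hne y
      have hdp : dist y p = ε := by rw [← hpd, heq]
      -- nearest point characterization
      have hiInf : ‖y - p‖ = ⨅ w : X, ‖y - w‖ := by
        have : Nonempty X := hne.to_subtype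
        calc ‖y - p‖ = dist y p := (dist_eq_norm y p).symm
          _ = infDist y X := hpd.symm
          _ = ⨅ w : X, dist y w := infDist_eq_iInf
          _ = ⨅ w : X, ‖y - w‖ := by simp [dist_eq_norm]
      have hinner : ∀ w ∈ X, inner ℝ (y - p) (w - p) ≤ (0 : ℝ) :=
        (norm_eq_iInf_iff_real_inner_le_zero hconv hpX).mp hiInf
      set t : ℝ := r / (2 * ε) with ht
      have htpos : 0 < t := div_pos hr (by linarith)
      set v := y - p with hv
      have hnv : ‖v‖ = ε := by rw [hv, ← dist_eq_norm]; exact hdp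
      set z := y + t • v with hz
      have hzy : dist z y = t * ε := by
        rw [hz, dist_eq_norm, add_sub_cancel_left, norm_smul, Real.norm_of_nonneg htpos.le, hnv]
      have hzball : z ∈ ball y r := by
        have h2 : t * ε = r / 2 := by rw [ht]; field_simp
        rw [mem_ball, hzy, h2]
        linarith
      have hzS : infDist z X ≤ ε := (interior_subset : interior {z : EuclideanSpace ℝ (Fin m) | infDist z X ≤ ε} ⊆ _) (hball hzball)
      -- lower bound on infDist z X
      have hlow : ∀ x ∈ X, (1 + t) * ε ≤ dist z x := by
        intro x hx
        have hcalc : z - x = (1 + t) • v + (p - x) := by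
          rw [hz, hv]; module
        have hin : (0:ℝ) ≤ inner ℝ ((1 + t) • v) (p - x) := by
          have := hinner x hx
          have h2 : inner ℝ ((1+t) • v) (p - x) = (1+t) * (-(inner ℝ v (x - p))) := by
            rw [real_inner_smul_left]
            congr 1
            rw [← inner_neg_right, neg_sub]
          rw [h2]
          have h3 : (0:ℝ) ≤ -(inner ℝ v (x - p)) := by
            have : inner ℝ v (x - p) ≤ (0:ℝ) := hinner x hx
            linarith
          positivity
        have hsq : ((1 + t) * ε) ^ 2 ≤ ‖z - x‖ ^ 2 := by
          rw [hcalc, @norm_add_sq_real]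
          have : ‖(1 + t) • v‖ = (1 + t) * ε := by
            rw [norm_smul, Real.norm_of_nonneg (by linarith), hnv]
          rw [this]
          nlinarith [sq_nonneg ‖p - x‖, hin]
        rw [dist_eq_norm]
        have h1 : (0:ℝ) ≤ (1 + t) * ε := by positivity
        nlinarith [norm_nonneg (z - x)]
      have : (1 + t) * ε ≤ infDist z X := by
        have : Nonempty X := hne.to_subtype
        rw [infDist_eq_iInf]
        exact le_ciInf fun w => hlow w w.2
      nlinarith
    · exact (isOpen_lt hcont continuous_const).subset_interior_iff.mpr
        (fun z hz => show infDist z X ≤ ε from le_of_lt hz)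
  rw [frontier, hclosed.closure_eq, hint]
  ext y
  simp only [mem_diff, mem_setOf_eq, not_lt]
  constructor
  · rintro ⟨h1, h2⟩; exact le_antisymm h1 h2
  · rintro h; exact ⟨h.le, h.ge⟩
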